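/- arXiv:1810.08265 — 4 statements merged into one kernel-verified Lean document; each statement's English description precedes it below -/
import Mathlib

section
/- Let A be an invertible n×n real matrix with inverse B. Then the symmetric part A_s of A is invertible if and only if the symmetric part B_s of B is invertible. -/
open Matrix

/-- Fact II: for an invertible matrix `A` with inverse `B = A⁻¹`, the symmetric part
of `A` is invertible iff the symmetric part of `B` is invertible. -/
theorem fact_II {n : ℕ} (A : Matrix (Fin n) (Fin n) ℝ) (hA : IsUnit A) :
    IsUnit ((1/2 : ℝ) • (A + Aᵀ)) ↔ IsUnit ((1/2 : ℝ) • (A⁻¹ + (A⁻¹)ᵀ)) := by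
  have hdet : IsUnit A.det := (Matrix.isUnit_iff_isUnit_det A).mp hA
  have key : (1/2 : ℝ) • (A⁻¹ + (A⁻¹)ᵀ) = A⁻¹ * ((1/2 : ℝ) • (A + Aᵀ)) * (A⁻¹)ᵀ := by
    rw [Matrix.mul_smul, Matrix.smul_mul]
    congr 1
    rw [Matrix.transpose_nonsing_inv, Matrix.mul_add, Matrix.add_mul,
      Matrix.nonsing_inv_mul A hdet, Matrix.one_mul, Matrix.mul_assoc,
      Matrix.mul_nonsing_inv Aᵀ (by simpa using hdet), Matrix.mul_one, add_comm]
  have hinv : IsUnit (Ring.inverse A.det) := isUnit_ringInverse.mpr hdet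
  rw [key]
  simp only [Matrix.isUnit_iff_isUnit_det, Matrix.det_mul, Matrix.det_transpose,
    Matrix.det_nonsing_inv, IsUnit.mul_iff, hinv, true_and, and_true]
end

section
/- Let ψ be a symmetric positive-definite n×n real matrix and C an antisymmetric n×n real matrix. Then det(I + ψ⁻¹ C) ≥ 1; in particular I + ψ⁻¹C, i.e. ψ + C, is invertible. -/
open Matrix

lemma skew_dot_zero {n : ℕ} {A : Matrix (Fin n) (Fin n) ℝ} (hA : Aᵀ = -A)
    (v : Fin n → ℝ) : v ⬝ᵥ A *ᵥ v = 0 := by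
  have h : v ⬝ᵥ A *ᵥ v = -(v ⬝ᵥ A *ᵥ v) := by
    conv_lhs => rw [dotProduct_mulVec, ← mulVec_transpose, hA, neg_mulVec,
      neg_dotProduct, dotProduct_comm]
  linarith

lemma skew_det_ne_zero {n : ℕ} {A : Matrix (Fin n) (Fin n) ℝ} (hA : Aᵀ = -A) :
    (1 + A).det ≠ 0 := by
  intro h
  obtain ⟨v, hv, hmv⟩ := (Matrix.exists_mulVec_eq_zero_iff).2 h
  apply hv
  have h1 : v ⬝ᵥ (1 + A) *ᵥ v = 0 := by rw [hmv, dotProduct_zero]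
  rw [add_mulVec, one_mulVec, dotProduct_add, skew_dot_zero hA, add_zero] at h1
  exact dotProduct_self_eq_zero.mp h1

lemma psd_det_one_add {n : ℕ} {P : Matrix (Fin n) (Fin n) ℝ} (hP : P.PosSemidef) :
    1 ≤ (1 + P).det := by
  have hH : (1 + P).IsHermitian := (Matrix.isHermitian_one).add hP.1
  rw [hH.det_eq_prod_eigenvalues]
  have key : ∀ i ∈ (Finset.univ : Finset (Fin n)), (1:ℝ) ≤ hH.eigenvalues i := by
    intro i _
    rw [hH.eigenvalues_eq i]
    set v : Fin n → ℝ := ⇑(hH.eigenvectorBasis i) with hv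
    have h1 : star v ⬝ᵥ (1 + P) *ᵥ v = star v ⬝ᵥ v + star v ⬝ᵥ P *ᵥ v := by
      rw [add_mulVec, one_mulVec, dotProduct_add]
    have h2 : (0:ℝ) ≤ star v ⬝ᵥ P *ᵥ v := hP.dotProduct_mulVec_nonneg v
    have h3 : star v ⬝ᵥ v = 1 := by
      have h4 := hH.eigenvectorBasis.orthonormal.1 i
      have h5 : (inner ℝ (hH.eigenvectorBasis i) (hH.eigenvectorBasis i) : ℝ) = 1 := by
        rw [real_inner_self_eq_norm_sq, h4]; norm_num
      rw [EuclideanSpace.inner_eq_star_dotProduct] at h5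
      simpa using h5
    show (1:ℝ) ≤ star v ⬝ᵥ (1 + P) *ᵥ v
    rw [h1, h3]
    linarith
  calc (1:ℝ) = ∏ _i : Fin n, 1 := by simp
    _ ≤ ∏ i, hH.eigenvalues i := Finset.prod_le_prod (fun i _ => zero_le_one) key
    _ = ∏ i, ((hH.eigenvalues i : ℝ)) := rfl

lemma skew_one_le_det {n : ℕ} {A : Matrix (Fin n) (Fin n) ℝ} (hA : Aᵀ = -A) :
    1 ≤ (1 + A).det := by
  -- positivity via IVT
  have hne : ∀ t : ℝ, (1 + t • A).det ≠ 0 := fun t =>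
    skew_det_ne_zero (by rw [transpose_smul, hA, smul_neg])
  have hcont : Continuous fun t : ℝ => (1 + t • A).det := by
    exact Continuous.matrix_det (continuous_const.add (continuous_id.smul continuous_const))
  have hpos : 0 < (1 + A).det := by
    by_contra hle
    push_neg at hle
    have h0 : (0:ℝ) ∈ Set.Icc ((1 + (1:ℝ) • A).det) ((1 + (0:ℝ) • A).det) := by
      constructor
      · simpa using hle
      · simp
    obtain ⟨t, _, ht⟩ := intermediate_value_Icc' (by norm_num : (0:ℝ) ≤ 1)
      (hcont.continuousOn) h0
    exact hne t ht
  -- squared bound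
  have hsq : (1 + A).det * (1 + A).det = (1 + Aᵀ * A).det := by
    have h12 : (1 + A).det = (1 - A).det := by
      rw [← det_transpose (1 + A), transpose_add, transpose_one, hA, sub_eq_add_neg]
    nth_rewrite 2 [h12]
    rw [← det_mul]
    congr 1
    have h3 : Aᵀ * A = -(A * A) := by rw [hA, neg_mul]
    rw [h3]
    noncomm_ring
  have hpsd : (Aᵀ * A).PosSemidef := by
    have := Matrix.posSemidef_conjTranspose_mul_self A
    rwa [conjTranspose_eq_transpose_of_trivial] at this
  have h1 : 1 ≤ (1 + A).det * (1 + A).det := hsq ▸ psd_det_one_add hpsd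
  nlinarith

/-- If `ψ` is symmetric positive-definite and `C` is antisymmetric, then
`det (I + ψ⁻¹ C) ≥ 1`; in particular both `I + ψ⁻¹ C` and `ψ + C` are invertible. -/
theorem det_one_add_inv_mul_antisymm {n : ℕ} (ψ C : Matrix (Fin n) (Fin n) ℝ)
    (hψ : ψ.PosDef) (hψs : ψᵀ = ψ) (hC : Cᵀ = -C) :
    1 ≤ (1 + ψ⁻¹ * C).det ∧ IsUnit (1 + ψ⁻¹ * C) ∧ IsUnit (ψ + C) := by
  have hinv : (ψ⁻¹).PosDef := hψ.inv
  set S := (open scoped MatrixOrder in CFC.sqrt ψ⁻¹) with hS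
  have hSS : S * S = ψ⁻¹ := by
    open scoped MatrixOrder in exact CFC.sqrt_mul_sqrt_self _ hinv.posSemidef.nonneg
  have hSsym : Sᵀ = S := by
    have : S.IsHermitian := by
      open scoped MatrixOrder in exact (CFC.sqrt_nonneg ψ⁻¹).posSemidef.1
    rwa [IsHermitian, conjTranspose_eq_transpose_of_trivial] at this
  have hSdet : S.det ≠ 0 := by
    intro h
    have : (ψ⁻¹).det = 0 := by rw [← hSS, det_mul, h, mul_zero]
    have hψd : ψ.det ≠ 0 := ne_of_gt hψ.det_pos
    rw [det_nonsing_inv] at this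
    exact hψd (by simpa using this)
  have hSdet' : IsUnit S.det := isUnit_iff_ne_zero.2 hSdet
  have hSinvUnit : IsUnit S⁻¹ := (Matrix.isUnit_iff_isUnit_det _).2
    (by rw [det_nonsing_inv]; exact isUnit_iff_ne_zero.2 (by simp [Ring.inverse_eq_inv', inv_ne_zero hSdet]))
  have hAskew : (S * C * S)ᵀ = -(S * C * S) := by
    rw [transpose_mul, transpose_mul, hSsym, hC, neg_mul, mul_neg, ← mul_assoc]
  have hconj : S⁻¹ * (1 + ψ⁻¹ * C) * S = 1 + S * C * S := by
    rw [← hSS]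
    rw [mul_add, mul_one, add_mul, Matrix.nonsing_inv_mul S hSdet',
      show S⁻¹ * (S * S * C) * S = S⁻¹ * S * (S * C * S) by noncomm_ring,
      Matrix.nonsing_inv_mul S hSdet', one_mul]
  have hdet : (1 + ψ⁻¹ * C).det = (1 + S * C * S).det := by
    rw [← hconj]
    rw [show S⁻¹ * (1 + ψ⁻¹ * C) * S = S⁻¹ * (1 + ψ⁻¹ * C) * S⁻¹⁻¹ by
      rw [Matrix.nonsing_inv_nonsing_inv S hSdet']]
    rw [Matrix.det_conj hSinvUnit _]
  have h1 : 1 ≤ (1 + ψ⁻¹ * C).det := by rw [hdet]; exact skew_one_le_det hAskew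
  have h2 : IsUnit (1 + ψ⁻¹ * C) := (Matrix.isUnit_iff_isUnit_det _).2
    (isUnit_iff_ne_zero.2 (by linarith))
  refine ⟨h1, h2, ?_⟩
  have : ψ + C = ψ * (1 + ψ⁻¹ * C) := by
    rw [mul_add, mul_one, ← mul_assoc, Matrix.mul_nonsing_inv ψ (isUnit_iff_ne_zero.2 (ne_of_gt hψ.det_pos)), one_mul]
  rw [this]
  exact ((Matrix.isUnit_iff_isUnit_det ψ).2 (isUnit_iff_ne_zero.2 (ne_of_gt hψ.det_pos))).mul h2
end

section
/- Let φ be an invertible n×n real matrix. The 2n×2n block matrix g = [[(φ⁻¹)_s, φ⁻¹F/2],[−F(φᵀ)⁻¹/2, φ_s]] with F an antisymmetric n×n matrix is positive-definite if and only if both φ_s and φ_s + (1/4) F (φ_s)⁻¹ F are positive-definite. -/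
open Matrix

theorem myPosDef_conj {m : Type*} [Fintype m] [DecidableEq m] {M P : Matrix m m ℝ}
    (hM : M.PosDef) (hP : IsUnit P) : (Pᵀ * M * P).PosDef := by
  refine PosDef.of_dotProduct_mulVec_pos ?_ fun x hx => ?_
  · have hMs : Mᵀ = M := by rw [← conjTranspose_eq_transpose_of_trivial]; exact hM.1
    rw [IsHermitian, conjTranspose_eq_transpose_of_trivial, transpose_mul, transpose_mul,
      transpose_transpose, hMs, Matrix.mul_assoc]
  · have hPx : P *ᵥ x ≠ 0 := fun h =>
      hx (mulVec_injective_iff_isUnit.2 hP (h.trans (mulVec_zero P).symm))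
    have : star x ⬝ᵥ (Pᵀ * M * P) *ᵥ x = star (P *ᵥ x) ⬝ᵥ M *ᵥ (P *ᵥ x) := by
      rw [← mulVec_mulVec, ← mulVec_mulVec, star_trivial, star_trivial,
        dotProduct_mulVec x, vecMul_transpose]
    rw [this]
    exact hM.dotProduct_mulVec_pos hPx

theorem myPosDef_fromBlocks₂₂ {m n : Type*} [Fintype m] [DecidableEq m] [Fintype n]
    [DecidableEq n] (A : Matrix m m ℝ) (B : Matrix m n ℝ) {D : Matrix n n ℝ}
    (hD : D.PosDef) :
    (fromBlocks A B Bᴴ D).PosDef ↔ (A - B * D⁻¹ * Bᴴ).PosDef := by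
  haveI := hD.isUnit.invertible
  rw [posDef_iff_dotProduct_mulVec, posDef_iff_dotProduct_mulVec, IsHermitian.fromBlocks₂₂ _ _ hD.1]
  refine and_congr_right fun _ => ⟨fun h2 x hx => ?_, fun h2 x hx => ?_⟩
  · have hne : (Sum.elim x (-((D⁻¹ * Bᴴ) *ᵥ x)) : m ⊕ n → ℝ) ≠ 0 := fun h =>
      hx (funext fun i => congrFun h (Sum.inl i))
    have := h2 hne
    rw [dotProduct_mulVec, schur_complement_eq₂₂ A B _ _ hD.1, add_neg_cancel] at this
    simpa [dotProduct_mulVec] using this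
  · rw [dotProduct_mulVec, ← Sum.elim_comp_inl_inr x, schur_complement_eq₂₂ A B _ _ hD.1]
    by_cases h : x ∘ Sum.inl = 0
    · have h2' : x ∘ Sum.inr ≠ 0 := by
        intro h'
        apply hx
        rw [← Sum.elim_comp_inl_inr x, h, h']
        ext (i | i) <;> rfl
      have := hD.dotProduct_mulVec_pos h2'
      rw [dotProduct_mulVec] at this
      simpa [h] using this
    · have t1 : (0:ℝ) ≤ star ((D⁻¹ * Bᴴ) *ᵥ (x ∘ Sum.inl) + x ∘ Sum.inr) ᵥ* D ⬝ᵥ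
          ((D⁻¹ * Bᴴ) *ᵥ (x ∘ Sum.inl) + x ∘ Sum.inr) := by
        rw [← dotProduct_mulVec]
        exact hD.posSemidef.dotProduct_mulVec_nonneg _
      have t2 := h2 h
      rw [dotProduct_mulVec] at t2
      linarith

theorem myPosDef_block₂₂ {m n : Type*} [Fintype m] [Fintype n] {A : Matrix m m ℝ}
    {B : Matrix m n ℝ} {C : Matrix n m ℝ} {D : Matrix n n ℝ}
    (h : (fromBlocks A B C D).PosDef) (hD : D.IsHermitian) : D.PosDef := by
  refine PosDef.of_dotProduct_mulVec_pos hD fun x hx => ?_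
  have hne : (Sum.elim (0 : m → ℝ) x) ≠ 0 := fun h' =>
    hx (funext fun i => congrFun h' (Sum.inr i))
  have := h.dotProduct_mulVec_pos hne
  simpa [fromBlocks_mulVec, dotProduct_block] using this

/-- The block matrix `g = [[(φ⁻¹)ₛ, φ⁻¹F/2],[−F(φᵀ)⁻¹/2, φₛ]]`, with `φ` invertible and
`F` antisymmetric, is positive-definite iff both `φₛ` and `φₛ + (1/4) F (φₛ)⁻¹ F` are
positive-definite. -/
theorem blockMetric_posDef_iff {n : ℕ} (φ F : Matrix (Fin n) (Fin n) ℝ)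
    (hφ : IsUnit φ) (hF : Fᵀ = -F) :
    (Matrix.fromBlocks
        ((1/2 : ℝ) • (φ⁻¹ + (φ⁻¹)ᵀ)) ((1/2 : ℝ) • (φ⁻¹ * F))
        (-((1/2 : ℝ) • (F * (φᵀ)⁻¹))) ((1/2 : ℝ) • (φ + φᵀ))).PosDef ↔
      ((1/2 : ℝ) • (φ + φᵀ)).PosDef ∧
      ((1/2 : ℝ) • (φ + φᵀ) +
        (1/4 : ℝ) • (F * ((1/2 : ℝ) • (φ + φᵀ))⁻¹ * F)).PosDef := by
  have hdet : IsUnit φ.det := (isUnit_iff_isUnit_det φ).mp hφ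
  have hdetT : IsUnit φᵀ.det := by rwa [det_transpose]
  have hinv1 : φ⁻¹ * φ = 1 := nonsing_inv_mul φ hdet
  have hinv2 : φ * φ⁻¹ = 1 := mul_nonsing_inv φ hdet
  have hinv3 : φᵀ * (φᵀ)⁻¹ = 1 := mul_nonsing_inv φᵀ hdetT
  have hinv4 : (φᵀ)⁻¹ * φᵀ = 1 := nonsing_inv_mul φᵀ hdetT
  set D := (1/2 : ℝ) • (φ + φᵀ) with hDdef
  set B := (1/2 : ℝ) • (φ⁻¹ * F) with hBdef
  have hB : -((1/2 : ℝ) • (F * (φᵀ)⁻¹)) = Bᴴ := by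
    rw [hBdef, conjTranspose_eq_transpose_of_trivial, transpose_smul, transpose_mul, hF,
      transpose_nonsing_inv, Matrix.neg_mul, smul_neg]
  have hDher : D.IsHermitian := by
    rw [IsHermitian, conjTranspose_eq_transpose_of_trivial, hDdef, transpose_smul,
      transpose_add, transpose_transpose, add_comm]
  have hA : (1/2 : ℝ) • (φ⁻¹ + (φ⁻¹)ᵀ) = φ⁻¹ * D * (φᵀ)⁻¹ := by
    rw [hDdef, Matrix.mul_smul, Matrix.smul_mul, Matrix.mul_add, hinv1, Matrix.add_mul,
      Matrix.one_mul, Matrix.mul_assoc, hinv3, Matrix.mul_one, transpose_nonsing_inv, add_comm]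
  have hBDB : B * D⁻¹ * Bᴴ = -((1/4 : ℝ) • (φ⁻¹ * (F * D⁻¹ * F) * (φᵀ)⁻¹)) := by
    rw [← hB, hBdef]
    rw [Matrix.smul_mul, Matrix.smul_mul, Matrix.mul_neg, Matrix.mul_smul]
    rw [smul_neg, smul_smul]
    norm_num [Matrix.mul_assoc]
  have hkey : (1/2 : ℝ) • (φ⁻¹ + (φ⁻¹)ᵀ) - B * D⁻¹ * Bᴴ =
      φ⁻¹ * (D + (1/4 : ℝ) • (F * D⁻¹ * F)) * (φᵀ)⁻¹ := by
    rw [hA, hBDB, sub_neg_eq_add, Matrix.mul_add, Matrix.add_mul]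
    simp only [Matrix.mul_smul, Matrix.smul_mul]
  have hTunit : IsUnit φᵀ := (isUnit_transpose φ).mpr hφ
  have hTinv : IsUnit (φᵀ)⁻¹ := isUnit_nonsing_inv_iff.mpr hTunit
  have hconjback : ((((φᵀ)⁻¹)ᵀ : Matrix (Fin n) (Fin n) ℝ)) = φ⁻¹ := by
    rw [transpose_nonsing_inv, transpose_transpose]
  rw [hB, hA]
  constructor
  · intro hg
    have hD : D.PosDef := myPosDef_block₂₂ hg hDher
    refine ⟨hD, ?_⟩
    have hs := (myPosDef_fromBlocks₂₂ _ _ hD).mp hg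
    rw [← hA, hkey] at hs
    have := myPosDef_conj hs hTunit
    rw [transpose_transpose] at this
    have hcancel : φ * (φ⁻¹ * (D + (1/4 : ℝ) • (F * D⁻¹ * F)) * (φᵀ)⁻¹) * φᵀ =
        D + (1/4 : ℝ) • (F * D⁻¹ * F) := by
      rw [← Matrix.mul_assoc, ← Matrix.mul_assoc, hinv2, Matrix.one_mul, Matrix.mul_assoc,
        hinv4, Matrix.mul_one]
    rwa [hcancel] at this
  · rintro ⟨hD, h2⟩
    rw [myPosDef_fromBlocks₂₂ _ _ hD, ← hA, hkey]
    have := myPosDef_conj h2 hTinv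
    rwa [hconjback] at this
end

section
/- Let J₊ and J₋ be linear complex structures on a finite-dimensional real vector space V (J₊² = J₋² = −Id) such that J₊ + J₋ is invertible, and let D ⊆ V be a subspace. Then (J₊ − J₋)(J₊ + J₋)⁻¹ D ⊆ D if and only if J₊ D = J₋ D. -/
open Submodule Module

section Aux

variable {V : Type*} [AddCommGroup V] [Module ℝ V] [FiniteDimensional ℝ V]

private lemma map_mul_submodule (f g : Module.End ℝ V) (D : Submodule ℝ V) :
    Submodule.map (f * g) D = Submodule.map f (Submodule.map g D) := by
  rw [Module.End.mul_eq_comp, Submodule.map_comp]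

private lemma map_eq_self_of_le {f g : Module.End ℝ V} (h1 : f * g = 1) (h2 : g * f = 1)
    {D : Submodule ℝ V} (h : Submodule.map f D ≤ D) : Submodule.map f D = D := by
  let e : V ≃ₗ[ℝ] V := LinearEquiv.ofLinear f g
    (by rw [← Module.End.mul_eq_comp, h1]; rfl)
    (by rw [← Module.End.mul_eq_comp, h2]; rfl)
  have he : Submodule.map f D = Submodule.map (e : V →ₗ[ℝ] V) D := rfl
  refine Submodule.eq_of_le_of_finrank_le h ?_
  rw [he, LinearEquiv.finrank_map_eq]

private lemma finrank_map_of_inv {f g : Module.End ℝ V} (h1 : f * g = 1) (h2 : g * f = 1)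
    (D : Submodule ℝ V) : finrank ℝ (Submodule.map f D) = finrank ℝ D := by
  let e : V ≃ₗ[ℝ] V := LinearEquiv.ofLinear f g
    (by rw [← Module.End.mul_eq_comp, h1]; rfl)
    (by rw [← Module.End.mul_eq_comp, h2]; rfl)
  have he : Submodule.map f D = Submodule.map (e : V →ₗ[ℝ] V) D := rfl
  rw [he, LinearEquiv.finrank_map_eq]

end Aux

/-- Linear-algebra core of Theorem 4.3: for linear complex structures `J₊, J₋` on a
finite-dimensional real vector space with `J₊ + J₋` invertible (with two-sided inverse `K`),
and a subspace `D`, one has `(J₊ − J₋)(J₊ + J₋)⁻¹ D ⊆ D ↔ J₊ D = J₋ D`. -/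
theorem antidiagonal_iff_strongHamiltonian {V : Type*} [AddCommGroup V] [Module ℝ V]
    [FiniteDimensional ℝ V] (Jp Jm K : Module.End ℝ V)
    (hJp : Jp * Jp = -1) (hJm : Jm * Jm = -1)
    (hK1 : (Jp + Jm) * K = 1) (hK2 : K * (Jp + Jm) = 1)
    (D : Submodule ℝ V) :
    Submodule.map ((Jp - Jm) * K) D ≤ D ↔
      Submodule.map Jp D = Submodule.map Jm D := by
  -- invertibility of Jp and Jm
  have hJp1 : Jp * (-Jp) = 1 := by rw [mul_neg, hJp, neg_neg]
  have hJp2 : (-Jp) * Jp = 1 := by rw [neg_mul, hJp, neg_neg]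
  have hJm1 : Jm * (-Jm) = 1 := by rw [mul_neg, hJm, neg_neg]
  have hJm2 : (-Jm) * Jm = 1 := by rw [neg_mul, hJm, neg_neg]
  constructor
  · -- forward direction
    intro h
    set T : Module.End ℝ V := (Jp - Jm) * K with hT
    -- 1 + T = 2 • (Jp * K), 1 - T = 2 • (Jm * K)
    have hP2 : 1 + T = (2 : ℝ) • (Jp * K) := by
      rw [hT, ← hK1, ← add_mul, ← smul_mul_assoc]
      congr 1
      module
    have hM2 : 1 - T = (2 : ℝ) • (Jm * K) := by
      rw [hT, ← hK1, ← sub_mul, ← smul_mul_assoc]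
      congr 1
      module
    -- inverse of 1 + T
    have hPQ : (1 + T) * ((-(1/2 : ℝ)) • ((Jp + Jm) * Jp)) = 1 := by
      rw [hP2, smul_mul_assoc, mul_smul_comm, smul_smul]
      have : Jp * K * ((Jp + Jm) * Jp) = -1 := by
        rw [mul_assoc, ← mul_assoc K, hK2, one_mul, hJp]
      rw [this]
      norm_num
    have hQP : ((-(1/2 : ℝ)) • ((Jp + Jm) * Jp)) * (1 + T) = 1 :=
      mul_eq_one_comm.1 hPQ
    -- (1 + T) maps D into D, hence onto D
    have hPle : Submodule.map (1 + T) D ≤ D := by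
      rw [Submodule.map_le_iff_le_comap]
      intro x hx
      have : (1 + T) x = x + T x := rfl
      simp only [Submodule.mem_comap, this]
      exact add_mem hx (h (Submodule.mem_map_of_mem hx))
    have hPD : Submodule.map (1 + T) D = D := map_eq_self_of_le hPQ hQP hPle
    -- S := -(Jm * Jp) satisfies S * (1 + T) = 1 - T
    have hS : (-(Jm * Jp)) * (1 + T) = 1 - T := by
      rw [hP2, hM2, mul_smul_comm]
      congr 1
      rw [neg_mul, mul_assoc Jm Jp, ← mul_assoc Jp Jp, hJp, neg_one_mul, mul_neg, neg_neg]
    -- hence S maps D into D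
    have hSD : Submodule.map (-(Jm * Jp)) D ≤ D := by
      have : Submodule.map (-(Jm * Jp)) D = Submodule.map (1 - T) D := by
        rw [← hS, map_mul_submodule, hPD]
      rw [this, Submodule.map_le_iff_le_comap]
      intro x hx
      have hx1 : (1 - T) x = x - T x := rfl
      simp only [Submodule.mem_comap, hx1]
      exact sub_mem hx (h (Submodule.mem_map_of_mem hx))
    -- Jp = Jm * (-(Jm * Jp))
    have hfac : Jm * (-(Jm * Jp)) = Jp := by
      rw [mul_neg, ← mul_assoc, hJm, neg_mul, one_mul, neg_neg]
    have hle : Submodule.map Jp D ≤ Submodule.map Jm D := by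
      rw [← hfac, map_mul_submodule]
      exact Submodule.map_mono hSD
    refine Submodule.eq_of_le_of_finrank_le hle ?_
    rw [finrank_map_of_inv hJp1 hJp2, finrank_map_of_inv hJm1 hJm2]
  · -- reverse direction
    intro h
    set E : Submodule ℝ V := Submodule.map Jp D with hE
    have hE' : Submodule.map Jm D = E := h.symm
    have hJpE : Submodule.map Jp E = D := by
      rw [hE, ← map_mul_submodule, hJp, D.map_neg 1, Module.End.one_eq_id, Submodule.map_id]
    have hJmE : Submodule.map Jm E = D := by
      rw [h, ← map_mul_submodule, hJm, D.map_neg 1, Module.End.one_eq_id, Submodule.map_id]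
    -- (Jp + Jm) maps D into E and E into D
    have hAD : Submodule.map (Jp + Jm) D ≤ E := by
      rw [Submodule.map_le_iff_le_comap]
      intro x hx
      have : (Jp + Jm) x = Jp x + Jm x := rfl
      simp only [Submodule.mem_comap, this]
      exact add_mem (Submodule.mem_map_of_mem hx) (hE' ▸ Submodule.mem_map_of_mem hx)
    have hAE : Submodule.map (Jp + Jm) E ≤ D := by
      rw [Submodule.map_le_iff_le_comap]
      intro x hx
      have : (Jp + Jm) x = Jp x + Jm x := rfl
      simp only [Submodule.mem_comap, this]
      exact add_mem (hJpE ▸ Submodule.mem_map_of_mem hx)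
        (hJmE ▸ Submodule.mem_map_of_mem hx)
    -- by dimension count these are equalities
    have hrkE : finrank ℝ E = finrank ℝ D := finrank_map_of_inv hJp1 hJp2 D
    have hADeq : Submodule.map (Jp + Jm) D = E := by
      refine Submodule.eq_of_le_of_finrank_le hAD ?_
      rw [finrank_map_of_inv hK1 hK2, hrkE]
    have hAEeq : Submodule.map (Jp + Jm) E = D := by
      refine Submodule.eq_of_le_of_finrank_le hAE ?_
      rw [finrank_map_of_inv hK1 hK2, hrkE]
    -- hence K maps D onto E
    have hKD : Submodule.map K D = E := by
      rw [← hAEeq, ← map_mul_submodule, hK2, Module.End.one_eq_id, Submodule.map_id]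
    -- conclude
    rw [map_mul_submodule, hKD, Submodule.map_le_iff_le_comap]
    intro x hx
    have : (Jp - Jm) x = Jp x - Jm x := rfl
    simp only [Submodule.mem_comap, this]
    exact sub_mem (hJpE ▸ Submodule.mem_map_of_mem hx) (hJmE ▸ Submodule.mem_map_of_mem hx)
end
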